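/- arXiv:2209.11548 — 2 statements merged into one kernel-verified Lean document; each statement's English description precedes it below -/
import Mathlib

section
/- Suppose w ∈ S_n has exactly n-2 antiexceedances and w has exactly two nontrivial cycles. Then each of the two cycles, when written starting from its largest element, lists its remaining elements in strictly decreasing order; equivalently, the largest element of each cycle is not an antiexceedance and every other non-fixed point is an antiexceedance. -/
/-- The set of antiexceedances of a permutation of `Fin n`: elements `i` with `i < w⁻¹ i`. -/
def aexc {n : ℕ} (w : Equiv.Perm (Fin n)) : Finset (Fin n) :=
  Finset.univ.filter fun i => i < w⁻¹ i

lemma aexc_mem {n : ℕ} (w : Equiv.Perm (Fin n)) (i : Fin n) :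
    i ∈ aexc w ↔ i < w⁻¹ i := by simp [aexc]

/-- If `w` has exactly `n - 2` antiexceedances and exactly two nontrivial cycles, then
the largest element of each cycle is not an antiexceedance and every other non-fixed
point is an antiexceedance: a non-fixed point `i` is an antiexceedance iff there is a
strictly larger element in the same cycle. -/
theorem twoCycles_structure (n : ℕ) (hn : 2 ≤ n) (w : Equiv.Perm (Fin n))
    (ha : (aexc w).card = n - 2) (hc : Multiset.card w.cycleType = 2) :
    ∀ i : Fin n, w i ≠ i →
      (i ∈ aexc w ↔ ∃ j : Fin n, w.SameCycle i j ∧ i < j) := by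
  classical
  have hcf : w.cycleFactorsFinset.card = 2 := by
    simpa [Equiv.Perm.cycleType_def] using hc
  obtain ⟨c₁, c₂, hne, hset⟩ := Finset.card_eq_two.mp hcf
  have hc₁ : c₁ ∈ w.cycleFactorsFinset := by rw [hset]; simp
  have hc₂ : c₂ ∈ w.cycleFactorsFinset := by rw [hset]; simp
  have hcyc₁ : c₁.IsCycle := (Equiv.Perm.mem_cycleFactorsFinset_iff.mp hc₁).1
  have hcyc₂ : c₂.IsCycle := (Equiv.Perm.mem_cycleFactorsFinset_iff.mp hc₂).1
  have hne₁ : c₁.support.Nonempty := Finset.card_pos.mp (by have := hcyc₁.two_le_card_support; omega)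
  have hne₂ : c₂.support.Nonempty := Finset.card_pos.mp (by have := hcyc₂.two_le_card_support; omega)
  set m₁ := c₁.support.max' hne₁ with hm₁
  set m₂ := c₂.support.max' hne₂ with hm₂
  have hdisj : Disjoint c₁.support c₂.support := by
    have := w.cycleFactorsFinset_pairwise_disjoint hc₁ hc₂ hne
    exact Equiv.Perm.disjoint_iff_disjoint_support.mp this
  -- every non-fixed point lies in exactly one of the two supports
  have hsupp : ∀ x : Fin n, x ∈ w.support → x ∈ c₁.support ∨ x ∈ c₂.support := by
    intro x hx
    have h1 : w.cycleOf x ∈ w.cycleFactorsFinset :=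
      Equiv.Perm.cycleOf_mem_cycleFactorsFinset_iff.mpr hx
    have hx' : x ∈ (w.cycleOf x).support :=
      Equiv.Perm.mem_support_cycleOf_iff.mpr ⟨Equiv.Perm.SameCycle.refl _ _, hx⟩
    rw [hset, Finset.mem_insert, Finset.mem_singleton] at h1
    rcases h1 with h | h
    · left; rw [h] at hx'; exact hx'
    · right; rw [h] at hx'; exact hx'
  -- elements of a cycle factor's support are in w.support and same cycle
  have hsc : ∀ c ∈ w.cycleFactorsFinset, ∀ x ∈ c.support, ∀ y ∈ c.support,
      w.SameCycle x y := by
    intro c hcm x hx y hy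
    have hx' : x ∈ w.support := Equiv.Perm.mem_cycleFactorsFinset_support_le hcm hx
    have := Equiv.Perm.cycle_is_cycleOf hx hcm
    rw [this] at hy
    exact (Equiv.Perm.mem_support_cycleOf_iff.mp hy).1
  have hinvmem : ∀ c ∈ w.cycleFactorsFinset, ∀ x ∈ c.support, w⁻¹ x ∈ c.support := by
    intro c hcm x hx
    have hx' : x ∈ w.support := Equiv.Perm.mem_cycleFactorsFinset_support_le hcm hx
    have hceq := Equiv.Perm.cycle_is_cycleOf hx hcm
    rw [hceq] at hx ⊢
    rw [Equiv.Perm.mem_support_cycleOf_iff] at hx ⊢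
    exact ⟨hx.1.trans ⟨-1, by simp⟩, hx.2⟩
  -- maxes are not antiexceedances
  have hmax_not : ∀ c ∈ w.cycleFactorsFinset, ∀ hne : c.support.Nonempty,
      c.support.max' hne ∉ aexc w := by
    intro c hcm hne'
    set m := c.support.max' hne'
    have hm : m ∈ c.support := c.support.max'_mem hne'
    have h1 : w⁻¹ m ∈ c.support := hinvmem c hcm m hm
    have h2 : w⁻¹ m ≤ m := c.support.le_max' _ h1
    rw [aexc_mem]
    exact fun h => absurd h2 (not_le.mpr h)
  have hm₁mem : m₁ ∈ c₁.support := c₁.support.max'_mem hne₁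
  have hm₂mem : m₂ ∈ c₂.support := c₂.support.max'_mem hne₂
  have hmne : m₁ ≠ m₂ := fun h => by
    exact Finset.disjoint_left.mp hdisj hm₁mem (h ▸ hm₂mem)
  -- aexc ⊆ w.support \ {m₁, m₂}
  have hsub : aexc w ⊆ w.support \ {m₁, m₂} := by
    intro i hi
    have hi' : i < w⁻¹ i := (aexc_mem w i).mp hi
    have his : i ∈ w.support := by
      rw [Equiv.Perm.mem_support]
      intro h
      have : w⁻¹ i = i := by rw [Equiv.Perm.inv_eq_iff_eq, h]
      rw [this] at hi'; exact lt_irrefl _ hi'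
    refine Finset.mem_sdiff.mpr ⟨his, ?_⟩
    simp only [Finset.mem_insert, Finset.mem_singleton]
    rintro (rfl | rfl)
    · exact hmax_not c₁ hc₁ hne₁ hi
    · exact hmax_not c₂ hc₂ hne₂ hi
  -- counting
  have hm₁s : m₁ ∈ w.support := Equiv.Perm.mem_cycleFactorsFinset_support_le hc₁ hm₁mem
  have hm₂s : m₂ ∈ w.support := Equiv.Perm.mem_cycleFactorsFinset_support_le hc₂ hm₂mem
  have hpair : ({m₁, m₂} : Finset (Fin n)) ⊆ w.support := by
    intro x hx
    simp only [Finset.mem_insert, Finset.mem_singleton] at hx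
    rcases hx with rfl | rfl <;> assumption
  have hcard : (w.support \ {m₁, m₂}).card = w.support.card - 2 := by
    rw [Finset.card_sdiff_of_subset hpair, Finset.card_pair hmne]
  have hsle : w.support.card ≤ n := by
    simpa using Finset.card_le_card (Finset.subset_univ w.support)
  have heq : aexc w = w.support \ {m₁, m₂} := by
    apply Finset.eq_of_subset_of_card_le hsub
    rw [hcard, ha]
    omega
  -- conclusion
  intro i hi
  have his : i ∈ w.support := Equiv.Perm.mem_support.mpr hi
  rw [heq, Finset.mem_sdiff]
  simp only [Finset.mem_insert, Finset.mem_singleton]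
  rcases hsupp i his with hi1 | hi1
  · constructor
    · rintro ⟨-, hnm⟩
      refine ⟨m₁, hsc c₁ hc₁ i hi1 m₁ hm₁mem, ?_⟩
      have hle : i ≤ m₁ := c₁.support.le_max' _ hi1
      exact lt_of_le_of_ne hle (fun h => hnm (Or.inl h))
    · rintro ⟨j, hj, hij⟩
      have hceq := Equiv.Perm.cycle_is_cycleOf hi1 hc₁
      have hjmem : j ∈ c₁.support := by
        rw [hceq, Equiv.Perm.mem_support_cycleOf_iff]
        exact ⟨hj, his⟩
      have hjle : j ≤ m₁ := c₁.support.le_max' _ hjmem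
      refine ⟨his, ?_⟩
      rintro (rfl | rfl)
      · exact absurd (lt_of_lt_of_le hij hjle) (lt_irrefl _)
      · exact Finset.disjoint_left.mp hdisj hi1 hm₂mem
  · constructor
    · rintro ⟨-, hnm⟩
      refine ⟨m₂, hsc c₂ hc₂ i hi1 m₂ hm₂mem, ?_⟩
      have hle : i ≤ m₂ := c₂.support.le_max' _ hi1
      exact lt_of_le_of_ne hle (fun h => hnm (Or.inr h))
    · rintro ⟨j, hj, hij⟩
      have hceq := Equiv.Perm.cycle_is_cycleOf hi1 hc₂
      have hjmem : j ∈ c₂.support := by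
        rw [hceq, Equiv.Perm.mem_support_cycleOf_iff]
        exact ⟨hj, his⟩
      have hjle : j ≤ m₂ := c₂.support.le_max' _ hjmem
      refine ⟨his, ?_⟩
      rintro (rfl | rfl)
      · exact Finset.disjoint_left.mp hdisj hm₁mem hi1
      · exact absurd (lt_of_lt_of_le hij hjle) (lt_irrefl _)
end

section
/- If w ∈ S_n has exactly n-2 antiexceedances, then w has at most two nontrivial cycles. -/
/-- If `w` has exactly `n - 2` antiexceedances then `w` has at most two nontrivial cycles. -/
theorem cycles_le_two (n : ℕ) (hn : 2 ≤ n) (w : Equiv.Perm (Fin n))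
    (ha : (aexc w).card = n - 2) : Multiset.card w.cycleType ≤ 2 := by
  classical
  have hcard : Multiset.card w.cycleType = w.cycleFactorsFinset.card := by
    simp [Equiv.Perm.cycleType]
  rw [hcard]
  -- map each cycle to the max of its support, landing in (aexc w)ᶜ
  have hsupp : ∀ c ∈ w.cycleFactorsFinset, c.support.Nonempty := by
    intro c hc
    exact Finset.card_pos.mp (by have := (Equiv.Perm.mem_cycleFactorsFinset_iff.mp hc).1.two_le_card_support; omega)
  have key : w.cycleFactorsFinset.card ≤ ((aexc w)ᶜ).card := by
    apply Finset.card_le_card_of_injOn (fun c => if h : c.support.Nonempty then c.support.max' h else ⟨0, by omega⟩)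
    · intro c hc
      simp only [Finset.mem_coe]; rw [dif_pos (hsupp c hc)]
      set m := c.support.max' (hsupp c hc) with hm
      have hmem : m ∈ c.support := c.support.max'_mem _
      have hco : c = w.cycleOf m := Equiv.Perm.cycle_is_cycleOf hmem hc
      have hinv : c⁻¹ m = w⁻¹ m := by
        rw [hco, Equiv.Perm.cycleOf_inv, Equiv.Perm.cycleOf_apply_self]
      have hmem' : c⁻¹ m ∈ c.support := by
        rwa [← Equiv.Perm.support_inv, Equiv.Perm.apply_mem_support, Equiv.Perm.support_inv]
      have hle : c⁻¹ m ≤ m := c.support.le_max' _ hmem'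
      simp only [Finset.mem_compl, aexc, Finset.mem_filter, Finset.mem_univ, true_and]
      rw [← hinv]
      exact not_lt.mpr hle
    · intro c hc d hd heq
      have hc' : c ∈ w.cycleFactorsFinset := hc
      have hd' : d ∈ w.cycleFactorsFinset := hd
      simp only [dif_pos (hsupp c hc'), dif_pos (hsupp d hd')] at heq
      by_contra hne
      have hdisj := Equiv.Perm.cycleFactorsFinset_pairwise_disjoint w hc' hd' hne
      have := Equiv.Perm.disjoint_iff_disjoint_support.mp hdisj
      exact Finset.disjoint_left.mp this (c.support.max'_mem _)
        (heq ▸ d.support.max'_mem _)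
  refine key.trans ?_
  rw [Finset.card_compl, ha]
  simp only [Fintype.card_fin]
  omega
end
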